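/- Let n, k, r be integers with k, r ≥ 2 and n ≥ k + r, and let H be a vertex-k-maximal r-uniform hypergraph on n vertices with separation triple (S, H_1, H_2). If e ∈ E(H_1^c) ∪ E(H_2^c), then every subhypergraph H' of H + e with κ(H') ≥ k + 1 is either a subhypergraph of H_1 + e or a subhypergraph of H_2 + e. Furthermore, if e ∈ E(H_i^c) ∖ E((H[S])^c) for i ∈ {1, 2}, then every such H' is a subhypergraph of H_i + e. -/

import Mathlib

/-- A finite hypergraph: a finite vertex set together with a finite set of
non-empty edges, each a subset of the vertex set. -/
structure NatHypergraph where
  verts : Finset ℕ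
  edges : Finset (Finset ℕ)
  edge_sub : ∀ e ∈ edges, e ⊆ verts
  edge_nonempty : ∀ e ∈ edges, e.Nonempty

namespace NatHypergraph

/-- `H` is `r`-uniform if every edge has cardinality `r`. -/
def IsUniform (H : NatHypergraph) (r : ℕ) : Prop := ∀ e ∈ H.edges, e.card = r

/-- `H'` is a subhypergraph of `H`. -/
def IsSub (H' H : NatHypergraph) : Prop := H'.verts ⊆ H.verts ∧ H'.edges ⊆ H.edges

/-- Two vertices are adjacent if some edge contains both. -/
def Adj (H : NatHypergraph) (u v : ℕ) : Prop := ∃ e ∈ H.edges, u ∈ e ∧ v ∈ e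

/-- `H` is connected if every pair of vertices is joined by a path
(equivalently, a walk, i.e. is reachable via the adjacency relation). -/
def Connected (H : NatHypergraph) : Prop :=
  ∀ u ∈ H.verts, ∀ v ∈ H.verts, Relation.ReflTransGen H.Adj u v

/-- The subhypergraph of `H` induced by the vertex set `Y`. -/
def induce (H : NatHypergraph) (Y : Finset ℕ) : NatHypergraph where
  verts := H.verts ∩ Y
  edges := H.edges.filter (fun e => e ⊆ Y)
  edge_sub := by
    intro e he
    simp only [Finset.mem_filter] at he
    exact Finset.subset_inter (H.edge_sub e he.1) he.2
  edge_nonempty := by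
    intro e he
    simp only [Finset.mem_filter] at he
    exact H.edge_nonempty e he.1

/-- `X` is a vertex-cut of `H` if deleting `X` leaves a disconnected hypergraph. -/
def IsVertexCut (H : NatHypergraph) (X : Finset ℕ) : Prop :=
  X ⊆ H.verts ∧ ¬ (H.induce (H.verts \ X)).Connected

open Classical in
/-- The vertex-connectivity of `H`: the minimum cardinality of a vertex-cut if one
exists, and `|V(H)| - 1` otherwise. -/
noncomputable def kappa (H : NatHypergraph) : ℕ :=
  if ∃ X, H.IsVertexCut X then sInf {m | ∃ X, H.IsVertexCut X ∧ X.card = m}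
  else H.verts.card - 1

/-- `κ̄(H)`: the maximum vertex-connectivity over all subhypergraphs of `H`. -/
noncomputable def kappaBar (H : NatHypergraph) : ℕ :=
  sSup {m | ∃ H' : NatHypergraph, H'.IsSub H ∧ H'.kappa = m}

/-- `H + e`: add the edge `e` (a non-empty subset of the vertices) to `H`. -/
def addEdge (H : NatHypergraph) (e : Finset ℕ) : NatHypergraph where
  verts := H.verts
  edges := if e ⊆ H.verts ∧ e.Nonempty then insert e H.edges else H.edges
  edge_sub := by
    intro f hf
    split at hf
    · rcases Finset.mem_insert.mp hf with rfl | hf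
      · exact (by assumption : f ⊆ H.verts ∧ f.Nonempty).1
      · exact H.edge_sub f hf
    · exact H.edge_sub f hf
  edge_nonempty := by
    intro f hf
    split at hf
    · rcases Finset.mem_insert.mp hf with rfl | hf
      · exact (by assumption : f ⊆ H.verts ∧ f.Nonempty).2
      · exact H.edge_nonempty f hf
    · exact H.edge_nonempty f hf

/-- `H + F`: add a set `F` of edges to `H`. -/
def addEdges (H : NatHypergraph) (F : Finset (Finset ℕ)) : NatHypergraph where
  verts := H.verts
  edges := H.edges ∪ F.filter (fun e => e ⊆ H.verts ∧ e.Nonempty)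
  edge_sub := by
    intro f hf
    rcases Finset.mem_union.mp hf with hf | hf
    · exact H.edge_sub f hf
    · exact (Finset.mem_filter.mp hf).2.1
  edge_nonempty := by
    intro f hf
    rcases Finset.mem_union.mp hf with hf | hf
    · exact H.edge_nonempty f hf
    · exact (Finset.mem_filter.mp hf).2.2

/-- `H` is vertex-`k`-maximal (as an `r`-uniform hypergraph): `κ̄(H) ≤ k`, but adding
any edge of the complement `H^c` creates a subhypergraph of connectivity at least `k + 1`. -/
def VertexKMaximal (H : NatHypergraph) (r k : ℕ) : Prop :=
  H.IsUniform r ∧ H.kappaBar ≤ k ∧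
    ∀ e : Finset ℕ, e ⊆ H.verts → e.card = r → e ∉ H.edges →
      k + 1 ≤ (H.addEdge e).kappaBar

/-- The complete `r`-uniform hypergraph on the vertex set `V`. -/
def completeHG (V : Finset ℕ) (r : ℕ) : NatHypergraph where
  verts := V
  edges := (V.powersetCard r).filter (fun e => e.Nonempty)
  edge_sub := by
    intro e he
    simp only [Finset.mem_filter, Finset.mem_powersetCard] at he
    exact he.1.1
  edge_nonempty := by
    intro e he
    exact (Finset.mem_filter.mp he).2

/-- The hypergraph on vertex set `V` with no edges. -/
def emptyHG (V : Finset ℕ) : NatHypergraph where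
  verts := V
  edges := ∅
  edge_sub := by simp
  edge_nonempty := by simp

/-- The `r`-join `H₁ ∨_r H₂`: the union of `H₁` and `H₂` together with all
`r`-element subsets of `V(H₁) ∪ V(H₂)` meeting both `V(H₁)` and `V(H₂)`. -/
def rJoin (H1 H2 : NatHypergraph) (r : ℕ) : NatHypergraph where
  verts := H1.verts ∪ H2.verts
  edges := H1.edges ∪ H2.edges ∪
    ((H1.verts ∪ H2.verts).powersetCard r).filter
      (fun e => (e ∩ H1.verts).Nonempty ∧ (e ∩ H2.verts).Nonempty)
  edge_sub := by
    intro e he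
    rcases Finset.mem_union.mp he with he | he
    · rcases Finset.mem_union.mp he with he | he
      · exact (H1.edge_sub e he).trans Finset.subset_union_left
      · exact (H2.edge_sub e he).trans Finset.subset_union_right
    · exact (Finset.mem_powersetCard.mp (Finset.mem_filter.mp he).1).1
  edge_nonempty := by
    intro e he
    rcases Finset.mem_union.mp he with he | he
    · rcases Finset.mem_union.mp he with he | he
      · exact H1.edge_nonempty e he
      · exact H2.edge_nonempty e he
    · obtain ⟨x, hx⟩ := (Finset.mem_filter.mp he).2.1
      exact ⟨x, (Finset.mem_inter.mp hx).1⟩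

/-- The union of two hypergraphs. -/
def hUnion (H1 H2 : NatHypergraph) : NatHypergraph where
  verts := H1.verts ∪ H2.verts
  edges := H1.edges ∪ H2.edges
  edge_sub := by
    intro e he
    rcases Finset.mem_union.mp he with he | he
    · exact (H1.edge_sub e he).trans Finset.subset_union_left
    · exact (H2.edge_sub e he).trans Finset.subset_union_right
  edge_nonempty := by
    intro e he
    rcases Finset.mem_union.mp he with he | he
    · exact H1.edge_nonempty e he
    · exact H2.edge_nonempty e he

/-- The union of the hypergraphs `f 0, …, f (m-1)`. -/
def unionOver (m : ℕ) (f : ℕ → NatHypergraph) : NatHypergraph where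
  verts := (Finset.range m).biUnion (fun i => (f i).verts)
  edges := (Finset.range m).biUnion (fun i => (f i).edges)
  edge_sub := by
    intro e he
    obtain ⟨i, hi, hei⟩ := Finset.mem_biUnion.mp he
    exact ((f i).edge_sub e hei).trans (Finset.subset_biUnion_of_mem (fun i => (f i).verts) hi)
  edge_nonempty := by
    intro e he
    obtain ⟨i, _, hei⟩ := Finset.mem_biUnion.mp he
    exact (f i).edge_nonempty e hei

/-- `C` is a component of `G`: a maximal connected subhypergraph. -/
def IsComponent (G C : NatHypergraph) : Prop :=
  C.IsSub G ∧ C.Connected ∧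
    ∀ C' : NatHypergraph, C'.IsSub G → C'.Connected → C.IsSub C' → C' = C

/-- `(S, H₁, H₂)` is a separation triple of `H`: `S` is a minimum vertex-cut,
`H₁ = H[S ∪ V(C₁)]` and `H₂ = H[S ∪ V(C₂)]`, where `C₁` is a component of `H - S`
and `C₂ = H - (S ∪ V(C₁))`. -/
def IsSeparationTriple (H : NatHypergraph) (S : Finset ℕ) (H1 H2 : NatHypergraph) : Prop :=
  H.IsVertexCut S ∧ (∀ X : Finset ℕ, H.IsVertexCut X → S.card ≤ X.card) ∧
    ∃ C1 : NatHypergraph, IsComponent (H.induce (H.verts \ S)) C1 ∧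
      H1 = H.induce (S ∪ C1.verts) ∧
      H2 = H.induce (S ∪ (H.verts \ (S ∪ C1.verts)))


lemma adj_symm (H : NatHypergraph) : Symmetric H.Adj := by
  rintro x y ⟨g, hg, hx, hy⟩; exact ⟨g, hg, hy, hx⟩

lemma kappa_le_card (H : NatHypergraph) : H.kappa ≤ H.verts.card := by
  unfold kappa
  split_ifs with h
  · obtain ⟨X, hX⟩ := h
    exact le_trans (Nat.sInf_le ⟨X, hX, rfl⟩) (Finset.card_le_card hX.1)
  · omega

lemma bddAbove_kappaBarSet (H : NatHypergraph) :
    BddAbove {m | ∃ H' : NatHypergraph, H'.IsSub H ∧ H'.kappa = m} := by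
  refine ⟨H.verts.card, ?_⟩
  rintro m ⟨H', hsub, rfl⟩
  exact le_trans H'.kappa_le_card (Finset.card_le_card hsub.1)

lemma kappa_le_kappaBar {H' H : NatHypergraph} (h : H'.IsSub H) : H'.kappa ≤ H.kappaBar :=
  le_csSup H.bddAbove_kappaBarSet ⟨H', h, rfl⟩

lemma edge_of_component {G C : NatHypergraph} (hC : IsComponent G C)
    {g : Finset ℕ} (hg : g ∈ G.edges) {w : ℕ} (hwg : w ∈ g) (hwC : w ∈ C.verts) :
    g ⊆ C.verts := by
  obtain ⟨hsub, hconn, hmax⟩ := hC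
  let C' : NatHypergraph :=
    { verts := C.verts ∪ g
      edges := insert g C.edges
      edge_sub := by
        intro f hf
        rcases Finset.mem_insert.mp hf with rfl | hf
        · exact Finset.subset_union_right
        · exact (C.edge_sub f hf).trans Finset.subset_union_left
      edge_nonempty := by
        intro f hf
        rcases Finset.mem_insert.mp hf with rfl | hf
        · exact ⟨w, hwg⟩
        · exact C.edge_nonempty f hf }
  have hsub' : C'.IsSub G := by
    constructor
    · intro x hx
      rcases Finset.mem_union.mp hx with hx | hx
      · exact hsub.1 hx
      · exact G.edge_sub g hg hx
    · intro f hf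
      rcases Finset.mem_insert.mp hf with rfl | hf
      · exact hg
      · exact hsub.2 hf
  have hCsub : C.IsSub C' := ⟨Finset.subset_union_left, Finset.subset_insert _ _⟩
  have hreachw : ∀ u ∈ C'.verts, Relation.ReflTransGen C'.Adj u w := by
    intro u hu
    rcases Finset.mem_union.mp hu with hu | hu
    · refine Relation.ReflTransGen.mono ?_ _ _ (hconn u hu w hwC)
      rintro x y ⟨f, hf, hx, hy⟩
      exact ⟨f, Finset.mem_insert_of_mem hf, hx, hy⟩
    · exact Relation.ReflTransGen.single ⟨g, Finset.mem_insert_self _ _, hu, hwg⟩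
  have hconn' : C'.Connected := by
    intro u hu v hv
    exact (hreachw u hu).trans
      (by haveI : Std.Symm C'.Adj := ⟨fun a b h => adj_symm C' h⟩; exact Relation.ReflTransGen.symmetric.symm _ _ (hreachw v hv))
  have heq : C' = C := hmax C' hsub' hconn' hCsub
  have hv : C.verts ∪ g = C.verts := congrArg verts heq
  intro x hx
  rw [← hv]; exact Finset.mem_union_right _ hx

lemma sub_of_verts_sub {H H' : NatHypergraph} {e W : Finset ℕ}
    (hsub : H'.IsSub (H.addEdge e)) (hW : H'.verts ⊆ W) :
    H'.IsSub ((H.induce W).addEdge e) := by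
  have hHv : (H.addEdge e).verts = H.verts := rfl
  constructor
  · intro x hx
    exact Finset.mem_inter.mpr ⟨hHv ▸ hsub.1 hx, hW hx⟩
  · intro g hg
    have hgv : g ⊆ H'.verts := H'.edge_sub g hg
    have hgH : g ∈ (H.addEdge e).edges := hsub.2 hg
    have hgW : g ⊆ W := hgv.trans hW
    have hgHV : g ⊆ H.verts := fun x hx => hHv ▸ hsub.1 (hgv hx)
    have hne : g.Nonempty := H'.edge_nonempty g hg
    show g ∈ (if e ⊆ (H.induce W).verts ∧ e.Nonempty
        then insert e (H.induce W).edges else (H.induce W).edges)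
    by_cases hgE : g ∈ H.edges
    · have hmem : g ∈ (H.induce W).edges := Finset.mem_filter.mpr ⟨hgE, hgW⟩
      split_ifs with h
      · exact Finset.mem_insert_of_mem hmem
      · exact hmem
    · have hge : g = e := by
        have : g ∈ (if e ⊆ H.verts ∧ e.Nonempty then insert e H.edges else H.edges) := hgH
        split_ifs at this with h
        · rcases Finset.mem_insert.mp this with h' | h'
          · exact h'
          · exact absurd h' hgE
        · exact absurd this hgE
      subst hge
      rw [if_pos ⟨fun x hx => Finset.mem_inter.mpr ⟨hgHV hx, hgW hx⟩, hne⟩]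
      exact Finset.mem_insert_self _ _

lemma verts_split
    {k : ℕ} {H : NatHypergraph} {S : Finset ℕ} {C1 : NatHypergraph}
    (hcomp : IsComponent (H.induce (H.verts \ S)) C1)
    (hSk : S.card ≤ k)
    {e : Finset ℕ}
    (he : e ⊆ S ∪ C1.verts ∨ e ⊆ S ∪ (H.verts \ (S ∪ C1.verts)))
    (H' : NatHypergraph) (hsub : H'.IsSub (H.addEdge e)) (hk : k + 1 ≤ H'.kappa) :
    H'.verts ⊆ S ∪ C1.verts ∨ H'.verts ⊆ S ∪ (H.verts \ (S ∪ C1.verts)) := by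
  set V2 : Finset ℕ := H.verts \ (S ∪ C1.verts) with hV2
  by_contra hcon
  push_neg at hcon
  obtain ⟨h1, h2⟩ := hcon
  obtain ⟨b, hb, hb2⟩ := Finset.not_subset.mp h1
  obtain ⟨a, ha, ha2⟩ := Finset.not_subset.mp h2
  have hHv : H'.verts ⊆ H.verts := hsub.1
  have hC1v : C1.verts ⊆ H.verts \ S := by
    intro x hx
    have := hcomp.1.1 hx
    exact (Finset.mem_inter.mp this).2
  -- b ∈ V2
  have hbV2 : b ∈ V2 := Finset.mem_sdiff.mpr ⟨hHv hb, hb2⟩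
  -- a ∈ C1.verts
  have haC1 : a ∈ C1.verts := by
    have haH : a ∈ H.verts := hHv ha
    by_contra hnc
    exact ha2 (by
      rcases Finset.mem_union.mp (show a ∈ S ∪ (C1.verts ∪ V2) from by
        by_cases haS : a ∈ S
        · exact Finset.mem_union_left _ haS
        · exact Finset.mem_union_right _ (Finset.mem_union_right _
            (Finset.mem_sdiff.mpr ⟨haH, fun h => by
              rcases Finset.mem_union.mp h with h | h
              · exact haS h
              · exact hnc h⟩))) with h | h
      · exact Finset.mem_union_left _ h
      · rcases Finset.mem_union.mp h with h | h
        · exact absurd h hnc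
        · exact Finset.mem_union_right _ h)
  set X : Finset ℕ := H'.verts ∩ S with hX
  -- edge dichotomy
  have hdich : ∀ g ∈ H'.edges, g ⊆ H'.verts \ X → g ⊆ C1.verts ∨ g ⊆ V2 := by
    intro g hg hgsub
    have hgS : ∀ x ∈ g, x ∉ S := by
      intro x hx hxS
      have hx' := hgsub hx
      rw [Finset.mem_sdiff] at hx'
      exact hx'.2 (Finset.mem_inter.mpr ⟨hx'.1, hxS⟩)
    have hgHV : g ⊆ H.verts := fun x hx => hHv (Finset.mem_sdiff.mp (hgsub hx)).1
    have hgVS : g ⊆ H.verts \ S := fun x hx =>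
      Finset.mem_sdiff.mpr ⟨hgHV hx, hgS x hx⟩
    have hcase : g = e ∨ g ∈ H.edges := by
      have : g ∈ (if e ⊆ H.verts ∧ e.Nonempty then insert e H.edges else H.edges) :=
        hsub.2 hg
      split_ifs at this with h
      · exact Finset.mem_insert.mp this
      · exact Or.inr this
    have hfromS : g ⊆ C1.verts ∨ g ⊆ V2 := by
      rcases hcase with rfl | hgE
      · rcases he with he | he
        · left
          intro x hx
          rcases Finset.mem_union.mp (he hx) with h | h
          · exact absurd h (hgS x hx)
          · exact h
        · right
          intro x hx
          rcases Finset.mem_union.mp (he hx) with h | h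
          · exact absurd h (hgS x hx)
          · exact h
      · have hgG : g ∈ (H.induce (H.verts \ S)).edges :=
          Finset.mem_filter.mpr ⟨hgE, hgVS⟩
        by_cases hmeet : ∃ w ∈ g, w ∈ C1.verts
        · obtain ⟨w, hw1, hw2⟩ := hmeet
          exact Or.inl (edge_of_component hcomp hgG hw1 hw2)
        · push_neg at hmeet
          right
          intro x hx
          exact Finset.mem_sdiff.mpr ⟨hgHV hx, fun h => by
            rcases Finset.mem_union.mp h with h | h
            · exact hgS x hx h
            · exact hmeet x hx h⟩
    exact hfromS
  -- X is a vertex cut of H'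
  have hdisj : ∀ x, x ∈ C1.verts → x ∈ V2 → False := by
    intro x h1 h2
    exact (Finset.mem_sdiff.mp h2).2 (Finset.mem_union_right _ h1)
  have hcut : H'.IsVertexCut X := by
    refine ⟨Finset.inter_subset_left, fun hconn => ?_⟩
    have haK : a ∈ (H'.induce (H'.verts \ X)).verts := by
      refine Finset.mem_inter.mpr ⟨ha, Finset.mem_sdiff.mpr ⟨ha, ?_⟩⟩
      intro h
      exact (Finset.mem_sdiff.mp (hC1v haC1)).2 (Finset.mem_inter.mp h).2
    have hbK : b ∈ (H'.induce (H'.verts \ X)).verts := by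
      refine Finset.mem_inter.mpr ⟨hb, Finset.mem_sdiff.mpr ⟨hb, ?_⟩⟩
      intro h
      exact (Finset.mem_sdiff.mp hbV2).2
        (Finset.mem_union_left _ (Finset.mem_inter.mp h).2)
    have hreach := hconn a haK b hbK
    have hstep : ∀ x y, (H'.induce (H'.verts \ X)).Adj x y →
        x ∈ C1.verts → y ∈ C1.verts := by
      rintro x y ⟨g, hg, hx, hy⟩ hxC
      have hg' := Finset.mem_filter.mp hg
      rcases hdich g hg'.1 hg'.2 with h | h
      · exact h hy
      · exact absurd (h hx) (fun hc => hdisj x hxC hc)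
    have hinv : ∀ y, Relation.ReflTransGen (H'.induce (H'.verts \ X)).Adj a y →
        y ∈ C1.verts := by
      intro y hy
      induction hy with
      | refl => exact haC1
      | tail _ hadj ih => exact hstep _ _ hadj ih
    exact hdisj b (hinv b hreach) hbV2
  -- kappa H' ≤ |X| ≤ k
  have hkap : H'.kappa ≤ X.card := by
    unfold kappa
    rw [if_pos ⟨X, hcut⟩]
    exact Nat.sInf_le ⟨X, hcut, rfl⟩
  have : X.card ≤ S.card := Finset.card_le_card Finset.inter_subset_right
  omega

end NatHypergraph

/-- With a separation triple `(S, H₁, H₂)` of a vertex-`k`-maximal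
`r`-uniform hypergraph `H`, every `(k+1)`-vertex-connected subhypergraph of `H + e`
with `e ∈ E(H₁^c) ∪ E(H₂^c)` lies in `H₁ + e` or `H₂ + e`; and if moreover
`e ∈ E(Hᵢ^c) ∖ E((H[S])^c)`, it lies in `Hᵢ + e`. -/
theorem stmt_3 (n k r : ℕ) (hk : 2 ≤ k) (hr : 2 ≤ r) (hn : k + r ≤ n)
    (H : NatHypergraph) (hcard : H.verts.card = n) (hH : H.VertexKMaximal r k)
    (S : Finset ℕ) (H1 H2 : NatHypergraph) (hsep : H.IsSeparationTriple S H1 H2)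
    (e : Finset ℕ) (hecard : e.card = r) :
    (((e ⊆ H1.verts ∧ e ∉ H1.edges) ∨ (e ⊆ H2.verts ∧ e ∉ H2.edges)) →
      ∀ H' : NatHypergraph, H'.IsSub (H.addEdge e) → k + 1 ≤ H'.kappa →
        H'.IsSub (H1.addEdge e) ∨ H'.IsSub (H2.addEdge e)) ∧
    ((e ⊆ H1.verts ∧ e ∉ H1.edges ∧ ¬(e ⊆ S ∧ e ∉ (H.induce S).edges)) →
      ∀ H' : NatHypergraph, H'.IsSub (H.addEdge e) → k + 1 ≤ H'.kappa →
        H'.IsSub (H1.addEdge e)) ∧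
    ((e ⊆ H2.verts ∧ e ∉ H2.edges ∧ ¬(e ⊆ S ∧ e ∉ (H.induce S).edges)) →
      ∀ H' : NatHypergraph, H'.IsSub (H.addEdge e) → k + 1 ≤ H'.kappa →
        H'.IsSub (H2.addEdge e)) := by
  classical
  obtain ⟨hScut, hSmin, C1, hcomp, hH1, hH2⟩ := hsep
  set V2 : Finset ℕ := H.verts \ (S ∪ C1.verts) with hV2def
  have hSsub : S ⊆ H.verts := hScut.1
  have hC1v : C1.verts ⊆ H.verts \ S := by
    intro x hx
    exact (Finset.mem_inter.mp (hcomp.1.1 hx)).2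
  have hC1H : C1.verts ⊆ H.verts := fun x hx => (Finset.mem_sdiff.mp (hC1v hx)).1
  have hH1v : H1.verts = S ∪ C1.verts := by
    rw [hH1]
    exact Finset.inter_eq_right.mpr (Finset.union_subset hSsub hC1H)
  have hH2v : H2.verts = S ∪ V2 := by
    rw [hH2]
    exact Finset.inter_eq_right.mpr
      (Finset.union_subset hSsub (Finset.sdiff_subset))
  have hSk : S.card ≤ k := by
    have h1 : S.card ≤ H.kappa := by
      unfold NatHypergraph.kappa
      rw [if_pos ⟨S, hScut⟩]
      refine le_csInf ⟨S.card, S, hScut, rfl⟩ ?_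
      rintro m ⟨X, hX, rfl⟩
      exact hSmin X hX
    have h2 : H.kappa ≤ H.kappaBar :=
      NatHypergraph.kappa_le_kappaBar ⟨subset_rfl, subset_rfl⟩
    have h3 := hH.2.1
    omega
  have hH1subH : H1.IsSub H := by
    rw [hH1]
    exact ⟨Finset.inter_subset_left, Finset.filter_subset _ _⟩
  have hH2subH : H2.IsSub H := by
    rw [hH2]
    exact ⟨Finset.inter_subset_left, Finset.filter_subset _ _⟩
  have part1 : ((e ⊆ H1.verts ∧ e ∉ H1.edges) ∨ (e ⊆ H2.verts ∧ e ∉ H2.edges)) →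
      ∀ H' : NatHypergraph, H'.IsSub (H.addEdge e) → k + 1 ≤ H'.kappa →
        H'.IsSub (H1.addEdge e) ∨ H'.IsSub (H2.addEdge e) := by
    intro hyp H' hsub hkap
    have he : e ⊆ S ∪ C1.verts ∨ e ⊆ S ∪ V2 := by
      rcases hyp with ⟨h, _⟩ | ⟨h, _⟩
      · exact Or.inl (hH1v ▸ h)
      · exact Or.inr (hH2v ▸ h)
    rcases NatHypergraph.verts_split hcomp hSk he H' hsub hkap with h | h
    · left
      rw [hH1]
      exact NatHypergraph.sub_of_verts_sub hsub h
    · right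
      rw [hH2]
      exact NatHypergraph.sub_of_verts_sub hsub h
  -- helper for parts 2/3: H' ⊆ Hi + e and e ∉ E(H') gives contradiction
  have hsmall : ∀ (Hi H' : NatHypergraph), Hi.IsSub H → H'.IsSub (Hi.addEdge e) →
      e ∉ H'.edges → k + 1 ≤ H'.kappa → False := by
    intro Hi H' hHi hsub heH' hkap
    have hsubH : H'.IsSub H := by
      constructor
      · exact (show H'.verts ⊆ Hi.verts from hsub.1).trans hHi.1
      · intro g hg
        have hgm : g ∈ (if e ⊆ Hi.verts ∧ e.Nonempty
            then insert e Hi.edges else Hi.edges) := hsub.2 hg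
        have : g = e ∨ g ∈ Hi.edges := by
          split_ifs at hgm with hc
          · exact Finset.mem_insert.mp hgm
          · exact Or.inr hgm
        rcases this with rfl | hg2
        · exact absurd hg heH'
        · exact hHi.2 hg2
    have h1 := NatHypergraph.kappa_le_kappaBar hsubH
    have h2 := hH.2.1
    omega
  refine ⟨part1, ?_, ?_⟩
  · rintro ⟨heV, heE, heS⟩ H' hsub hkap
    have hnotS : ¬ e ⊆ S := by
      intro hes
      apply heE
      have heH : e ∈ (H.induce S).edges := by
        by_contra h
        exact heS ⟨hes, h⟩
      have h' := Finset.mem_filter.mp heH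
      rw [hH1]
      exact Finset.mem_filter.mpr ⟨h'.1, hes.trans Finset.subset_union_left⟩
    obtain ⟨v, hv, hvS⟩ := Finset.not_subset.mp hnotS
    have hvC1 : v ∈ C1.verts := by
      rcases Finset.mem_union.mp (hH1v ▸ heV hv) with h | h
      · exact absurd h hvS
      · exact h
    rcases part1 (Or.inl ⟨heV, heE⟩) H' hsub hkap with h | h
    · exact h
    · exfalso
      by_cases heH' : e ∈ H'.edges
      · have h1 : e ⊆ H2.verts :=
          (H'.edge_sub e heH').trans (show H'.verts ⊆ H2.verts from h.1)
        have h2 := h1 hv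
        rw [hH2v] at h2
        rcases Finset.mem_union.mp h2 with hc | hc
        · exact hvS hc
        · exact (Finset.mem_sdiff.mp hc).2 (Finset.mem_union_right _ hvC1)
      · exact hsmall H2 H' hH2subH h heH' hkap
  · rintro ⟨heV, heE, heS⟩ H' hsub hkap
    have hnotS : ¬ e ⊆ S := by
      intro hes
      apply heE
      have heH : e ∈ (H.induce S).edges := by
        by_contra h
        exact heS ⟨hes, h⟩
      have h' := Finset.mem_filter.mp heH
      rw [hH2]
      exact Finset.mem_filter.mpr ⟨h'.1, hes.trans Finset.subset_union_left⟩
    obtain ⟨v, hv, hvS⟩ := Finset.not_subset.mp hnotS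
    have hvV2 : v ∈ V2 := by
      rcases Finset.mem_union.mp (hH2v ▸ heV hv) with h | h
      · exact absurd h hvS
      · exact h
    rcases part1 (Or.inr ⟨heV, heE⟩) H' hsub hkap with h | h
    · exfalso
      by_cases heH' : e ∈ H'.edges
      · have h1 : e ⊆ H1.verts :=
          (H'.edge_sub e heH').trans (show H'.verts ⊆ H1.verts from h.1)
        have h2 := h1 hv
        rw [hH1v] at h2
        exact (Finset.mem_sdiff.mp hvV2).2 h2
      · exact hsmall H1 H' hH1subH h heH' hkap
    · exact h
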